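/- arXiv:0809.2828 — 3 statements merged into one kernel-verified Lean document; each statement's English description precedes it below -/
import Mathlib

section
/- Let s ∈ ℝ, τ > 0, and let R, U : ℝ → ℝ be differentiable with R(η) > 0 for all η. Let P : ℝ → ℝ be differentiable (the traffic pressure law) and Ũ : ℝ → ℝ be any function (the desired speed law), and set c(η)² = P'(R(η)). Define ρ(x,t) = R((x − st)/τ), u(x,t) = U((x − st)/τ), p(x,t) = P(ρ(x,t)). Suppose ρ and u satisfy both ρ_t + (ρu)_x = 0 and u_t + u u_x + p_x/ρ = (Ũ(ρ) − u)/τ for all (x,t). Then at every η with (U(η) − s)² ≠ c(η)² and U(η) ≠ s, the traveling-wave ODE holds: U'(η) = (U(η) − s)(Ũ(R(η)) − U(η)) / ((U(η) − s)² − c(η)²). -/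
/-- If the traveling-wave ansatz ρ(x,t) = R((x − st)/τ),
u(x,t) = U((x − st)/τ), p = P(ρ) satisfies both the mass and momentum equations,
then wherever (U − s)² ≠ c² = P'(R) and U ≠ s, the traveling-wave ODE
U' = (U − s)(Ut(R) − U)/((U − s)² − c²) holds. -/
theorem jamiton_traveling_wave_ode
    (s τ : ℝ) (hτ : 0 < τ) (R U : ℝ → ℝ)
    (hR : Differentiable ℝ R) (hU : Differentiable ℝ U)
    (hRpos : ∀ η : ℝ, 0 < R η)
    (P : ℝ → ℝ) (hP : Differentiable ℝ P) (Ut : ℝ → ℝ)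
    (hmass : ∀ x t : ℝ,
      deriv (fun t' : ℝ => R ((x - s * t') / τ)) t
        + deriv (fun x' : ℝ => R ((x' - s * t) / τ) * U ((x' - s * t) / τ)) x = 0)
    (hmom : ∀ x t : ℝ,
      deriv (fun t' : ℝ => U ((x - s * t') / τ)) t
        + U ((x - s * t) / τ) * deriv (fun x' : ℝ => U ((x' - s * t) / τ)) x
        + deriv (fun x' : ℝ => P (R ((x' - s * t) / τ))) x / R ((x - s * t) / τ)
      = (Ut (R ((x - s * t) / τ)) - U ((x - s * t) / τ)) / τ) :
    ∀ η : ℝ, (U η - s) ^ 2 ≠ deriv P (R η) → U η ≠ s →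
      deriv U η
        = (U η - s) * (Ut (R η) - U η) / ((U η - s) ^ 2 - deriv P (R η)) := by
  intro η hne hUs
  have hτ' : τ ≠ 0 := hτ.ne'
  set x : ℝ := τ * η with hx
  have hη : (x - s * 0) / τ = η := by rw [hx, mul_zero, sub_zero]; exact mul_div_cancel_left₀ η hτ'
  -- inner derivatives
  have hinT : HasDerivAt (fun t' : ℝ => (x - s * t') / τ) (-s / τ) 0 := by
    have h : HasDerivAt (fun t' : ℝ => (x - s * t') / τ) ((0 - s * 1) / τ) 0 :=
      ((hasDerivAt_const 0 x).sub ((hasDerivAt_id 0).const_mul s)).div_const τ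
    simpa using h
  have hinX : HasDerivAt (fun x' : ℝ => (x' - s * 0) / τ) (1 / τ) x := by
    have h : HasDerivAt (fun x' : ℝ => (x' - s * 0) / τ) ((1 - 0) / τ) x :=
      ((hasDerivAt_id x).sub (hasDerivAt_const x (s * 0))).div_const τ
    simpa using h
  have hRt : HasDerivAt (fun t' : ℝ => R ((x - s * t') / τ)) (deriv R η * (-s / τ)) 0 := by
    have h := ((hR ((x - s * 0) / τ)).hasDerivAt).comp 0 hinT
    rw [hη] at h
    exact h
  have hUt' : HasDerivAt (fun t' : ℝ => U ((x - s * t') / τ)) (deriv U η * (-s / τ)) 0 := by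
    have h := ((hU ((x - s * 0) / τ)).hasDerivAt).comp 0 hinT
    rw [hη] at h
    exact h
  have hRx : HasDerivAt (fun x' : ℝ => R ((x' - s * 0) / τ)) (deriv R η * (1 / τ)) x := by
    have h := ((hR ((x - s * 0) / τ)).hasDerivAt).comp x hinX
    rw [hη] at h
    exact h
  have hUx : HasDerivAt (fun x' : ℝ => U ((x' - s * 0) / τ)) (deriv U η * (1 / τ)) x := by
    have h := ((hU ((x - s * 0) / τ)).hasDerivAt).comp x hinX
    rw [hη] at h
    exact h
  have hRUx : HasDerivAt (fun x' : ℝ => R ((x' - s * 0) / τ) * U ((x' - s * 0) / τ))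
      (deriv R η * (1 / τ) * U η + R η * (deriv U η * (1 / τ))) x := by
    have h := hRx.mul hUx
    rw [hη] at h
    exact h
  have hPx : HasDerivAt (fun x' : ℝ => P (R ((x' - s * 0) / τ)))
      (deriv P (R η) * (deriv R η * (1 / τ))) x := by
    have h := ((hP (R ((x - s * 0) / τ))).hasDerivAt).comp x hRx
    rw [hη] at h
    exact h
  have hm := hmass x 0
  have hmo := hmom x 0
  rw [hRt.deriv, hRUx.deriv] at hm
  rw [hUt'.deriv] at hmo
  rw [hUx.deriv] at hmo
  rw [hPx.deriv] at hmo
  rw [hη] at hmo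
  have hRne : R η ≠ 0 := (hRpos η).ne'
  have hUsne : U η - s ≠ 0 := sub_ne_zero.mpr hUs
  have hden : (U η - s) ^ 2 - deriv P (R η) ≠ 0 := sub_ne_zero.mpr hne
  -- mass: R' U + R U' = s R'
  have e1 : deriv R η * U η + R η * deriv U η = s * deriv R η := by
    field_simp at hm
    have h2 : (deriv R η * U η + R η * deriv U η) * τ = s * deriv R η * τ := by
      linear_combination τ * hm
    exact mul_right_cancel₀ hτ' h2
  -- momentum: (U - s) U' + P'(R) R' / R = Ut(R) - U
  have e2 : (U η - s) * deriv U η * R η + deriv P (R η) * deriv R η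
      = (Ut (R η) - U η) * R η := by
    field_simp at hmo
    have hτ3 : τ * τ * τ ≠ 0 := by positivity
    have h2 : ((U η - s) * deriv U η * R η + deriv P (R η) * deriv R η) * (τ * τ * τ)
        = (Ut (R η) - U η) * R η * (τ * τ * τ) := by
      linear_combination (τ * τ * τ) * hmo
    exact mul_right_cancel₀ hτ3 h2
  -- substitute R' (U - s) = - R U'
  have e3 : deriv R η * (U η - s) = - (R η * deriv U η) := by linarith [e1]
  have key : deriv U η * ((U η - s) ^ 2 - deriv P (R η)) = (U η - s) * (Ut (R η) - U η) := by
    have h2 : deriv U η * ((U η - s) ^ 2 - deriv P (R η)) * R η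
        = (U η - s) * (Ut (R η) - U η) * R η := by
      linear_combination (U η - s) * e2 - deriv P (R η) * e3
    exact mul_right_cancel₀ hRne h2
  field_simp
  linarith [key]
end

section
/- Let s ∈ ℝ, τ > 0, and let R, U : ℝ → ℝ be differentiable with R(η) > 0 and U(η) ≠ s for all η. Let P : ℝ → ℝ be differentiable and Ũ : ℝ → ℝ be any function. Suppose ρ(x,t) = R((x − st)/τ) and u(x,t) = U((x − st)/τ) satisfy ρ_t + (ρu)_x = 0 and u_t + u u_x + (P(ρ))_x/ρ = (Ũ(ρ) − u)/τ for all (x,t). Then at every η with (U(η) − s)² ≠ P'(R(η)), the density satisfies the ODE R'(η) = R(η)(U(η) − Ũ(R(η))) / ((U(η) − s)² − P'(R(η))). -/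
/-- Under the traveling-wave ansatz satisfying both PDEs of the
traffic model, the density profile satisfies the ODE
R' = R(U − Ũ(R))/((U − s)² − P'(R)) wherever (U − s)² ≠ P'(R). -/
theorem jamiton_density_ode
    (s τ : ℝ) (hτ : 0 < τ) (R U : ℝ → ℝ)
    (hR : Differentiable ℝ R) (hU : Differentiable ℝ U)
    (hRpos : ∀ η : ℝ, 0 < R η) (hUs : ∀ η : ℝ, U η ≠ s)
    (P : ℝ → ℝ) (hP : Differentiable ℝ P) (Ut : ℝ → ℝ)
    (hmass : ∀ x t : ℝ,
      deriv (fun t' : ℝ => R ((x - s * t') / τ)) t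
        + deriv (fun x' : ℝ => R ((x' - s * t) / τ) * U ((x' - s * t) / τ)) x = 0)
    (hmom : ∀ x t : ℝ,
      deriv (fun t' : ℝ => U ((x - s * t') / τ)) t
        + U ((x - s * t) / τ) * deriv (fun x' : ℝ => U ((x' - s * t) / τ)) x
        + deriv (fun x' : ℝ => P (R ((x' - s * t) / τ))) x / R ((x - s * t) / τ)
      = (Ut (R ((x - s * t) / τ)) - U ((x - s * t) / τ)) / τ) :
    ∀ η : ℝ, (U η - s) ^ 2 ≠ deriv P (R η) →
      deriv R η
        = R η * (U η - Ut (R η)) / ((U η - s) ^ 2 - deriv P (R η)) := by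
  intro η hne
  have hτ' : τ ≠ 0 := ne_of_gt hτ
  have hxt : (τ * η - s * 0) / τ = η := by field_simp; ring
  -- inner function derivatives
  have h1 : HasDerivAt (fun t' : ℝ => (τ * η - s * t') / τ) (-s / τ) 0 := by
    simpa using (((hasDerivAt_const (0:ℝ) (τ * η)).sub
      ((hasDerivAt_id (0:ℝ)).const_mul s)).div_const τ)
  have h2 : HasDerivAt (fun x' : ℝ => (x' - s * 0) / τ) (1 / τ) (τ * η) := by
    simpa using (((hasDerivAt_id (τ * η)).sub (hasDerivAt_const _ (s * 0))).div_const τ)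
  have hRη : HasDerivAt R (deriv R η) ((τ * η - s * 0) / τ) := by
    rw [hxt]; exact (hR η).hasDerivAt
  have hUη : HasDerivAt U (deriv U η) ((τ * η - s * 0) / τ) := by
    rw [hxt]; exact (hU η).hasDerivAt
  have hPRη : HasDerivAt (fun y => P (R y)) (deriv P (R η) * deriv R η)
      ((τ * η - s * 0) / τ) := by
    rw [hxt]; exact ((hP (R η)).hasDerivAt.comp η (hR η).hasDerivAt)
  -- compute the four PDE derivatives
  have dA : deriv (fun t' : ℝ => R ((τ * η - s * t') / τ)) 0 = deriv R η * (-s / τ) :=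
    (hRη.comp 0 h1).deriv
  have dB : deriv (fun x' : ℝ => R ((x' - s * 0) / τ) * U ((x' - s * 0) / τ)) (τ * η)
      = deriv R η * (1 / τ) * U η + R η * (deriv U η * (1 / τ)) := by
    have := ((hRη.comp (τ * η) h2).mul (hUη.comp (τ * η) h2)).deriv
    simp only [Function.comp_def, hxt] at this
    exact this
  have dC : deriv (fun t' : ℝ => U ((τ * η - s * t') / τ)) 0 = deriv U η * (-s / τ) :=
    (hUη.comp 0 h1).deriv
  have dD : deriv (fun x' : ℝ => U ((x' - s * 0) / τ)) (τ * η) = deriv U η * (1 / τ) :=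
    (hUη.comp (τ * η) h2).deriv
  have dE : deriv (fun x' : ℝ => P (R ((x' - s * 0) / τ))) (τ * η)
      = deriv P (R η) * deriv R η * (1 / τ) := by
    have := (hPRη.comp (τ * η) h2).deriv; exact this
  have E1 := hmass (τ * η) 0
  have E2 := hmom (τ * η) 0
  simp only [dA, dB, hxt] at E1
  simp only [dC, dD, dE, hxt] at E2
  have hRne : R η ≠ 0 := ne_of_gt (hRpos η)
  have hden : (U η - s) ^ 2 - deriv P (R η) ≠ 0 := sub_ne_zero.mpr hne
  rw [eq_div_iff hden]
  have E1' : deriv R η * (U η - s) + R η * deriv U η = 0 := by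
    field_simp at E1
    have h : (deriv R η * (U η - s) + R η * deriv U η) * τ = 0 := by
      linear_combination τ * E1
    exact (mul_eq_zero.mp h).resolve_right hτ'
  have E2' : (U η - s) * deriv U η * R η + deriv P (R η) * deriv R η
      = (Ut (R η) - U η) * R η := by
    field_simp at E2
    have h : ((U η - s) * deriv U η * R η + deriv P (R η) * deriv R η
        - (Ut (R η) - U η) * R η) * (τ * τ * τ) = 0 := by
      linear_combination τ ^ 3 * E2
    have hτ3 : τ * τ * τ ≠ 0 := by positivity
    have := (mul_eq_zero.mp h).resolve_right hτ3
    linarith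
  linear_combination (U η - s) * E1' - E2'
end

section
/- Let s ∈ ℝ, let U, R : ℝ → ℝ with U differentiable and U' continuous at η₀, let R be continuous at η₀, let P : ℝ → ℝ be differentiable with P' continuous, and let Ũ : ℝ → ℝ be continuous. Suppose that in a punctured neighborhood of η₀ one has (U(η) − s)² ≠ P'(R(η)) and U'(η) = (U(η) − s)(Ũ(R(η)) − U(η)) / ((U(η) − s)² − P'(R(η))), and suppose η₀ is a sonic point, i.e. (U(η₀) − s)² = P'(R(η₀)). Then (U(η₀) − s)(Ũ(R(η₀)) − U(η₀)) = 0; in particular, if U(η₀) ≠ s, then the desired speed matches the actual speed at the sonic point: Ũ(R(η₀)) = U(η₀). -/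
open Filter Topology

/-- Chapman–Jouguet / sonic-point condition: If the
traveling-wave ODE holds in a punctured neighborhood of a sonic point η₀
(where (U − s)² = P'(R)), and U', R, P', Ũ are suitably continuous, then the
numerator of the ODE must also vanish at η₀:
(U(η₀) − s)(Ũ(R(η₀)) − U(η₀)) = 0; in particular, if U(η₀) ≠ s, then
Ũ(R(η₀)) = U(η₀). -/
theorem sonic_point_chapman_jouguet
    (s η₀ : ℝ) (U R : ℝ → ℝ)
    (hU : Differentiable ℝ U) (hU' : ContinuousAt (deriv U) η₀)
    (hRcont : ContinuousAt R η₀)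
    (P : ℝ → ℝ) (hP : Differentiable ℝ P) (hP' : Continuous (deriv P))
    (Ut : ℝ → ℝ) (hUt : Continuous Ut)
    (hode : ∀ᶠ η in 𝓝[≠] η₀,
      (U η - s) ^ 2 ≠ deriv P (R η) ∧
      deriv U η
        = (U η - s) * (Ut (R η) - U η) / ((U η - s) ^ 2 - deriv P (R η)))
    (hsonic : (U η₀ - s) ^ 2 = deriv P (R η₀)) :
    (U η₀ - s) * (Ut (R η₀) - U η₀) = 0 ∧
      (U η₀ ≠ s → Ut (R η₀) = U η₀) := by
  have hUcont : ContinuousAt U η₀ := (hU η₀).continuousAt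
  set f : ℝ → ℝ := fun η => deriv U η * ((U η - s) ^ 2 - deriv P (R η)) with hf
  set g : ℝ → ℝ := fun η => (U η - s) * (Ut (R η) - U η) with hg
  have hfg : ∀ᶠ η in 𝓝[≠] η₀, f η = g η := by
    filter_upwards [hode] with η ⟨hne, heq⟩
    have hd : (U η - s) ^ 2 - deriv P (R η) ≠ 0 := sub_ne_zero.mpr hne
    simp only [hf, hg, heq]
    field_simp
  have hft : Tendsto f (𝓝[≠] η₀) (𝓝 0) := by
    have : ContinuousAt f η₀ := by
      apply hU'.mul
      exact ((hUcont.sub continuousAt_const).pow 2).sub (hP'.continuousAt.comp hRcont)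
    have h0 : f η₀ = 0 := by simp [hf, hsonic]
    exact h0 ▸ this.continuousWithinAt.tendsto
  have hgt : Tendsto g (𝓝[≠] η₀) (𝓝 (g η₀)) := by
    have : ContinuousAt g η₀ :=
      (hUcont.sub continuousAt_const).mul
        ((hUt.continuousAt.comp hRcont).sub hUcont)
    exact this.continuousWithinAt.tendsto
  have hgt0 : Tendsto g (𝓝[≠] η₀) (𝓝 0) := hft.congr' hfg
  have hzero : g η₀ = 0 := tendsto_nhds_unique hgt hgt0
  refine ⟨hzero, fun hne => ?_⟩
  have h1 : U η₀ - s ≠ 0 := sub_ne_zero.mpr hne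
  have h2 : Ut (R η₀) - U η₀ = 0 := by
    rcases mul_eq_zero.mp hzero with h | h
    · exact absurd h h1
    · exact h
  linarith
end
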